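/- Let F be a family of 2k−1 closed bounded intervals of the real line such that no point of ℝ is contained in more than k members of F. Then there exists an interval in F that contains every point of ℝ which is contained in at least k members of F. -/

import Mathlib

/-- Petruska's observation for intervals: among `2k-1` compact convex subsets
(intervals) of `ℝ` such that no point is covered more than `k` times, some
member contains every `k`-covered point. -/
theorem petruska_intervals (k : ℕ) (hk : 1 ≤ k) (F : Fin (2 * k - 1) → Set ℝ)
    (hcomp : ∀ i, IsCompact (F i)) (hconv : ∀ i, Convex ℝ (F i))
    (hcov : ∀ x : ℝ, ({i | x ∈ F i} : Set (Fin (2 * k - 1))).ncard ≤ k) :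
    ∃ i, ∀ x : ℝ, k ≤ ({j | x ∈ F j} : Set (Fin (2 * k - 1))).ncard → x ∈ F i := by
  classical
  by_cases hS : ∃ x : ℝ, k ≤ ({j | x ∈ F j} : Set (Fin (2 * k - 1))).ncard
  · set S : Set ℝ := {x | k ≤ ({j | x ∈ F j} : Set (Fin (2 * k - 1))).ncard} with hSdef
    have hEq : S = ⋃ T ∈ (Finset.univ.powersetCard k : Finset (Finset (Fin (2*k-1)))),
        ⋂ i ∈ T, F i := by
      ext x
      simp only [hSdef, Set.mem_setOf_eq, Set.mem_iUnion, Finset.mem_powersetCard,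
        Set.mem_iInter, exists_prop]
      constructor
      · intro hx
        have hfin : ({j | x ∈ F j} : Set (Fin (2*k-1))).Finite := Set.toFinite _
        rw [Set.ncard_eq_toFinset_card'] at hx
        obtain ⟨T, hT, hTc⟩ := Finset.exists_subset_card_eq hx
        refine ⟨T, ⟨Finset.subset_univ T, hTc⟩, fun i hi => ?_⟩
        have := hT hi
        simpa using this
      · rintro ⟨T, ⟨-, hTc⟩, hmem⟩
        calc k = T.card := hTc.symm
        _ = (↑T : Set (Fin (2*k-1))).ncard := (Set.ncard_coe_finset T).symm
        _ ≤ _ := Set.ncard_le_ncard (fun i hi => hmem i hi) (Set.toFinite _)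
    have hScomp : IsCompact S := by
      rw [hEq]
      refine (Finset.univ.powersetCard k).isCompact_biUnion (fun T hT => ?_)
      rw [Finset.mem_powersetCard] at hT
      have hTne : T.Nonempty := Finset.card_pos.mp (by omega)
      obtain ⟨i₀, hi₀⟩ := hTne
      refine IsCompact.of_isClosed_subset (hcomp i₀) ?_ ?_
      · exact isClosed_biInter (fun i _ => (hcomp i).isClosed)
      · exact Set.biInter_subset_of_mem hi₀
    obtain ⟨x₀, hx₀⟩ := hS
    obtain ⟨a, haS, ha⟩ := hScomp.exists_isLeast ⟨x₀, hx₀⟩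
    obtain ⟨b, hbS, hb⟩ := hScomp.exists_isGreatest ⟨x₀, hx₀⟩
    have hA : k ≤ ({j | a ∈ F j} : Set (Fin (2*k-1))).ncard := haS
    have hB : k ≤ ({j | b ∈ F j} : Set (Fin (2*k-1))).ncard := hbS
    have key : ∃ i, a ∈ F i ∧ b ∈ F i := by
      by_contra h
      push_neg at h
      have hdisj : Disjoint ({j | a ∈ F j} : Set (Fin (2*k-1))) {j | b ∈ F j} := by
        rw [Set.disjoint_left]
        intro j hja hjb
        exact h j hja hjb
      have h1 : (({j | a ∈ F j} : Set (Fin (2*k-1))) ∪ {j | b ∈ F j}).ncard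
          = ({j | a ∈ F j} : Set (Fin (2*k-1))).ncard
            + ({j | b ∈ F j} : Set (Fin (2*k-1))).ncard :=
        Set.ncard_union_eq hdisj (Set.toFinite _) (Set.toFinite _)
      have h2 : (({j | a ∈ F j} : Set (Fin (2*k-1))) ∪ {j | b ∈ F j}).ncard ≤ 2*k-1 := by
        calc _ ≤ (Set.univ : Set (Fin (2*k-1))).ncard :=
              Set.ncard_le_ncard (Set.subset_univ _) (Set.toFinite _)
        _ = 2*k-1 := by simp [Set.ncard_univ]
      omega
    obtain ⟨i, hia, hib⟩ := key
    refine ⟨i, fun x hx => ?_⟩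
    have hax : a ≤ x := ha hx
    have hxb : x ≤ b := hb hx
    exact (hconv i).ordConnected.out hia hib ⟨hax, hxb⟩
  · push_neg at hS
    refine ⟨⟨0, by omega⟩, fun x hx => absurd hx (not_le.mpr (hS x))⟩
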